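/- Define I : E → ℝ on E = H¹₀(0,1) by I(u) = 1 − cos(2π‖u‖²) if ‖u‖ ≤ 1 and I(u) = J((‖u‖²−1)u) if ‖u‖ > 1, where J(u) = (1/2)‖u‖² − (1/(p+1))∫₀¹|u|^{p+1}, p ∈ (0,1). Then every point of the unit sphere S = {u ∈ E : ‖u‖ = 1} is a critical point of I with I(u) = 0, and 0 is an isolated critical point of I. -/

import Mathlib

noncomputable section

open MeasureTheory intervalIntegral

/-- Membership in (a dense model of) `H¹₀(0,1)`: `u` vanishes at the endpoints, is
continuous on `[0,1]`, differentiable on `(0,1)`, and its derivative is square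
integrable on `(0,1)`. -/
def MemH10 (u : ℝ → ℝ) : Prop :=
  u 0 = 0 ∧ u 1 = 0 ∧ ContinuousOn u (Set.Icc 0 1) ∧
    (∀ x ∈ Set.Ioo (0 : ℝ) 1, HasDerivAt u (deriv u x) x) ∧
    IntervalIntegrable (fun x => (deriv u x) ^ 2) volume 0 1

/-- The `H¹₀` norm `‖u‖ = (∫₀¹ |u_x|² dx)^{1/2}`. -/
def Hnorm (u : ℝ → ℝ) : ℝ := Real.sqrt (∫ x in (0 : ℝ)..1, (deriv u x) ^ 2)

/-- The functional `J(u) = ½‖u‖² − (1/(p+1)) ∫₀¹ |u|^{p+1} dx`. -/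
def J (p : ℝ) (u : ℝ → ℝ) : ℝ :=
  (1 / 2) * Hnorm u ^ 2 - (1 / (p + 1)) * ∫ x in (0 : ℝ)..1, |u x| ^ (p + 1)

open Real
open Topology Filter

set_option maxHeartbeats 1000000

/-- The piecewise functional `I(u) = 1 − cos(2π‖u‖²)` for `‖u‖ ≤ 1`,
`I(u) = J((‖u‖²−1)u)` for `‖u‖ > 1`. -/
def Ipw (p : ℝ) (u : ℝ → ℝ) : ℝ :=
  if Hnorm u ≤ 1 then 1 - Real.cos (2 * π * Hnorm u ^ 2)
  else J p ((Hnorm u ^ 2 - 1) • u)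

/-- `u` is a critical point of `I` in the sense that all directional (Gateaux)
derivatives along directions in `H¹₀(0,1)` vanish. -/
def IsCritPt (p : ℝ) (u : ℝ → ℝ) : Prop :=
  ∀ v : ℝ → ℝ, MemH10 v → HasDerivAt (fun s : ℝ => Ipw p (u + s • v)) 0 0

lemma one_sub_cos_le_half_sq (x : ℝ) : 1 - Real.cos x ≤ x ^ 2 / 2 := by
  have h1 : Real.sin (x / 2) ^ 2 = 1 / 2 - Real.cos (2 * (x / 2)) / 2 :=
    Real.sin_sq_eq_half_sub (x / 2)
  have h2 : Real.sin (x / 2) ^ 2 ≤ (x / 2) ^ 2 := Real.sin_sq_le_sq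
  have h3 : (2 : ℝ) * (x / 2) = x := by ring
  rw [h3] at h1
  nlinarith [h1, h2]

lemma integral_sq_nonneg (f : ℝ → ℝ) : 0 ≤ ∫ x in (0:ℝ)..1, (f x) ^ 2 :=
  intervalIntegral.integral_nonneg zero_le_one (fun _ _ => sq_nonneg _)

lemma Hnorm_sq (u : ℝ → ℝ) : Hnorm u ^ 2 = ∫ x in (0:ℝ)..1, (deriv u x) ^ 2 :=
  Real.sq_sqrt (integral_sq_nonneg _)

lemma II_mul {u v : ℝ → ℝ} (hu : MemH10 u) (hv : MemH10 v) :
    IntervalIntegrable (fun x => deriv u x * deriv v x) volume 0 1 := by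
  have hg : IntervalIntegrable (fun x => (deriv u x) ^ 2 + (deriv v x) ^ 2) volume 0 1 :=
    hu.2.2.2.2.add hv.2.2.2.2
  refine hg.mono_fun ?_ ?_
  · exact ((measurable_deriv u).mul (measurable_deriv v)).aestronglyMeasurable
  · refine Filter.Eventually.of_forall fun x => ?_
    simp only [Real.norm_eq_abs]
    have h1 : |deriv u x * deriv v x| ≤ (deriv u x)^2 + (deriv v x)^2 := by
      rw [abs_mul]
      nlinarith [sq_abs (deriv u x), sq_abs (deriv v x), abs_nonneg (deriv u x),
        abs_nonneg (deriv v x), sq_nonneg (|deriv u x| - |deriv v x|)]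
    calc |deriv u x * deriv v x| ≤ (deriv u x)^2 + (deriv v x)^2 := h1
      _ ≤ |(deriv u x)^2 + (deriv v x)^2| := le_abs_self _

lemma ae_ne_one : ∀ᵐ x : ℝ, x ≠ 1 := by
  refine ae_iff.2 ?_
  simpa using Real.volume_singleton (x := (1:ℝ))

lemma integral_deriv_combo {u v : ℝ → ℝ} (hu : MemH10 u) (hv : MemH10 v) (a b : ℝ) :
    (∫ x in (0:ℝ)..1, (deriv (fun x => a * u x + b * v x) x) ^ 2)
      = a ^ 2 * (∫ x in (0:ℝ)..1, (deriv u x) ^ 2)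
        + 2 * a * b * (∫ x in (0:ℝ)..1, deriv u x * deriv v x)
        + b ^ 2 * (∫ x in (0:ℝ)..1, (deriv v x) ^ 2) := by
  have hae : ∀ᵐ x : ℝ, x ∈ Set.uIoc (0:ℝ) 1 →
      (deriv (fun x => a * u x + b * v x) x) ^ 2
        = a^2 * (deriv u x)^2 + 2*a*b*(deriv u x * deriv v x) + b^2 * (deriv v x)^2 := by
    filter_upwards [ae_ne_one] with x hx hmem
    rw [Set.uIoc_of_le zero_le_one] at hmem
    have hxIoo : x ∈ Set.Ioo (0:ℝ) 1 := ⟨hmem.1, lt_of_le_of_ne hmem.2 hx⟩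
    have hd : HasDerivAt (fun x => a * u x + b * v x)
        (a * deriv u x + b * deriv v x) x :=
      ((hu.2.2.2.1 x hxIoo).const_mul a).add ((hv.2.2.2.1 x hxIoo).const_mul b)
    rw [hd.deriv]; ring
  rw [intervalIntegral.integral_congr_ae hae,
    intervalIntegral.integral_add
      ((hu.2.2.2.2.const_mul _).add ((II_mul hu hv).const_mul _))
      (hv.2.2.2.2.const_mul _),
    intervalIntegral.integral_add (hu.2.2.2.2.const_mul _) ((II_mul hu hv).const_mul _),
    intervalIntegral.integral_const_mul, intervalIntegral.integral_const_mul,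
    intervalIntegral.integral_const_mul]

/-- `Hnorm` squared of a scalar multiple. -/
lemma Hnorm_sq_smul (c : ℝ) (w : ℝ → ℝ) :
    Hnorm (c • w) ^ 2 = c ^ 2 * ∫ x in (0:ℝ)..1, (deriv w x) ^ 2 := by
  have h1 : (c • w) = fun x => c * w x := by funext x; simp
  have h2 : (∫ x in (0:ℝ)..1, (deriv (fun x => c * w x) x) ^ 2)
      = c ^ 2 * ∫ x in (0:ℝ)..1, (deriv w x) ^ 2 := by
    have h3 : (fun x => (deriv (fun x => c * w x) x) ^ 2)
        = fun x => c ^ 2 * (deriv w x) ^ 2 := by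
      funext x; rw [deriv_const_mul_field]; ring
    rw [h3, intervalIntegral.integral_const_mul]
  rw [Hnorm_sq, h1, h2]

lemma crit_on_sphere {p : ℝ} (hp : p ∈ Set.Ioo (0:ℝ) 1) {u : ℝ → ℝ} (hu : MemH10 u)
    (hn : Hnorm u = 1) : IsCritPt p u := by
  intro v hv
  have hA : (∫ x in (0:ℝ)..1, (deriv u x) ^ 2) = 1 := by
    rw [← Hnorm_sq u, hn]; norm_num
  set B := ∫ x in (0:ℝ)..1, deriv u x * deriv v x with hB'
  set C := ∫ x in (0:ℝ)..1, (deriv v x) ^ 2 with hC'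
  have hC0 : 0 ≤ C := integral_sq_nonneg _
  clear_value B C
  have hW : ∀ s : ℝ, (u + s • v) = fun x => 1 * u x + s * v x := by
    intro s; funext x; simp
  have hNs : ∀ s : ℝ, (∫ x in (0:ℝ)..1, (deriv (u + s • v) x) ^ 2)
      = 1 + 2*B*s + C*s^2 := by
    intro s
    rw [hW s, integral_deriv_combo hu hv 1 s, hA, ← hB', ← hC']; ring
  have hHsq : ∀ s : ℝ, Hnorm (u + s • v) ^ 2 = 1 + 2*B*s + C*s^2 := fun s => by
    rw [Hnorm_sq, hNs s]
  have hNnn : ∀ s : ℝ, (0:ℝ) ≤ 1 + 2*B*s + C*s^2 := fun s => by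
    rw [← hNs s]; exact integral_sq_nonneg _
  -- sup bounds for u and v on [0,1]
  obtain ⟨Mu, hMu⟩ := isCompact_Icc.exists_bound_of_continuousOn hu.2.2.1
  obtain ⟨Mv, hMv⟩ := isCompact_Icc.exists_bound_of_continuousOn hv.2.2.1
  set Mw : ℝ := Mu + Mv + 1 with hMw'
  clear_value Mw
  have hMu0 : 0 ≤ Mu := le_trans (norm_nonneg _) (hMu 0 (by norm_num))
  have hMv0 : 0 ≤ Mv := le_trans (norm_nonneg _) (hMv 0 (by norm_num))
  have hMw0 : 0 ≤ Mw := by rw [hMw']; linarith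
  set D : ℝ := 2 * |B| + C with hD'
  clear_value D
  have hD0 : 0 ≤ D := by rw [hD']; positivity
  set K : ℝ := 2 * π^2 * D^2 + (1 + D)/2 * D^2 + (D * Mw)^(p+1) + 1 with hK'
  clear_value K
  have hrpK : (0:ℝ) ≤ (D * Mw)^(p+1) := Real.rpow_nonneg (mul_nonneg hD0 hMw0) _
  have hp1 : (0:ℝ) < p + 1 := by linarith [hp.1]
  -- main pointwise bound
  have key : ∀ s : ℝ, |s| ≤ 1 → |Ipw p (u + s • v)| ≤ K * (|s| * |s| + |s| ^ (p+1)) := by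
    intro s hs1
    set n : ℝ := 1 + 2*B*s + C*s^2 with hn'
    clear_value n
    have hn1 : |n - 1| ≤ D * |s| := by
      have e : n - 1 = 2*B*s + C*s^2 := by rw [hn']; ring
      rw [e]
      have e1 : |2*B*s| = 2* |B| * |s| := by rw [abs_mul, abs_mul, abs_two]
      have e2 : |C*s^2| = C*(|s| * |s|) := by
        rw [abs_mul, abs_of_nonneg hC0, abs_of_nonneg (sq_nonneg s), sq,
          ← abs_mul_abs_self]
      calc |2*B*s + C*s^2| ≤ |2*B*s| + |C*s^2| := abs_add_le _ _
        _ = 2* |B| * |s| + C*(|s| * |s|) := by rw [e1, e2]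
        _ ≤ D * |s| := by
            rw [hD']
            nlinarith [abs_nonneg s, abs_nonneg B, mul_nonneg hC0 (abs_nonneg s)]
    have hnn : 0 ≤ n := by rw [hn']; exact hNnn s
    have hnle : n ≤ 1 + D := by
      have h := (abs_le.1 hn1).2
      nlinarith [hD0, abs_nonneg s]
    have hsq : (n-1)^2 ≤ D^2 * (|s| * |s|) := by
      have h1 : |n-1| * |n-1| ≤ (D* |s|) * (D* |s|) :=
        mul_le_mul hn1 hn1 (abs_nonneg _) (mul_nonneg hD0 (abs_nonneg s))
      calc (n-1)^2 = |n-1| * |n-1| := by rw [abs_mul_abs_self]; ring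
        _ ≤ (D* |s|) * (D* |s|) := h1
        _ = D^2 * (|s| * |s|) := by ring
    have hrp : (0:ℝ) ≤ |s|^(p+1) := Real.rpow_nonneg (abs_nonneg s) _
    have hss : 0 ≤ |s| * |s| := mul_nonneg (abs_nonneg s) (abs_nonneg s)
    have h9 : (0:ℝ) ≤ (1+D)/2*D^2 :=
      mul_nonneg (by linarith : (0:ℝ) ≤ (1+D)/2) (sq_nonneg D)
    have hpi9 : (0:ℝ) ≤ 2*π^2*D^2 := by positivity
    have hK1 : 2*π^2*D^2 ≤ K := by rw [hK']; linarith [hrpK, h9]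
    have hK2 : (1+D)/2*D^2 ≤ K := by rw [hK']; linarith [hrpK, hpi9]
    have hK3 : (D*Mw)^(p+1) ≤ K := by rw [hK']; linarith [h9, hpi9]
    have hK0 : (0:ℝ) ≤ K := le_trans hpi9 hK1
    rw [Ipw]
    split_ifs with h
    · -- cos branch
      rw [hHsq s]
      have e : 2*π*(1 + 2*B*s + C*s^2) = 2*π*(n-1) + 2*π := by rw [hn']; ring
      rw [e, Real.cos_add_two_pi]
      have hub : 1 - Real.cos (2*π*(n-1)) ≤ (2*π*(n-1))^2/2 := one_sub_cos_le_half_sq _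
      have hlb : 0 ≤ 1 - Real.cos (2*π*(n-1)) := by
        linarith [Real.cos_le_one (2*π*(n-1))]
      rw [abs_of_nonneg hlb]
      calc 1 - Real.cos (2*π*(n-1)) ≤ (2*π*(n-1))^2/2 := hub
        _ = 2*π^2*(n-1)^2 := by ring
        _ ≤ 2*π^2*(D^2*(|s| * |s|)) :=
            mul_le_mul_of_nonneg_left hsq (by positivity : (0:ℝ) ≤ 2*π^2)
        _ = (2*π^2*D^2)*(|s| * |s|) := by ring
        _ ≤ K*(|s| * |s|) := mul_le_mul_of_nonneg_right hK1 hss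
        _ ≤ K * (|s| * |s| + |s|^(p+1)) :=
            mul_le_mul_of_nonneg_left (le_add_of_nonneg_right hrp) hK0
    · -- J branch
      rw [hHsq s, J]
      have hq : Hnorm ((1 + 2*B*s + C*s^2 - 1) • (u + s • v)) ^ 2 = (n-1)^2 * n := by
        rw [Hnorm_sq_smul, hNs s, hn']
      rw [hq]
      set Iv : ℝ := ∫ x in (0:ℝ)..1, |((1 + 2*B*s + C*s^2 - 1) • (u + s • v)) x| ^ (p+1)
        with hIv'
      clear_value Iv
      have hIb : |Iv| ≤ (|n-1| *Mw)^(p+1) * |(1:ℝ) - 0| := by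
        rw [hIv', ← Real.norm_eq_abs]
        apply intervalIntegral.norm_integral_le_of_norm_le_const
        intro x hx
        have hxI : x ∈ Set.Icc (0:ℝ) 1 := by
          rw [Set.uIoc_of_le zero_le_one] at hx
          exact Set.Ioc_subset_Icc_self hx
        have hwx : |(u + s • v) x| ≤ Mw := by
          have h1 := hMu x hxI
          have h2 := hMv x hxI
          simp only [Real.norm_eq_abs] at h1 h2
          have e3 : |(u + s • v) x| = |u x + s * v x| := by simp
          rw [e3]
          calc |u x + s * v x| ≤ |u x| + |s| * |v x| := by
                rw [← abs_mul]; exact abs_add_le _ _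
            _ ≤ Mu + 1 * Mv := by
                have := mul_le_mul hs1 h2 (abs_nonneg _) zero_le_one
                linarith
            _ ≤ Mw := by rw [hMw']; linarith
        have e4 : |((1 + 2*B*s + C*s^2 - 1) • (u + s • v)) x|
            = |n-1| * |(u + s • v) x| := by
          rw [hn']
          simp [abs_mul]
        rw [Real.norm_eq_abs, abs_of_nonneg (Real.rpow_nonneg (abs_nonneg _) _), e4]
        exact Real.rpow_le_rpow (mul_nonneg (abs_nonneg _) (abs_nonneg _))
          (mul_le_mul_of_nonneg_left hwx (abs_nonneg _)) hp1.le
      have hIb2 : |Iv| ≤ (D*Mw)^(p+1) * |s|^(p+1) := by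
        have h1 : (|n-1| *Mw)^(p+1) ≤ ((D*Mw)* |s|)^(p+1) := by
          apply Real.rpow_le_rpow (mul_nonneg (abs_nonneg _) hMw0) _ hp1.le
          calc |n-1| *Mw ≤ (D* |s|)*Mw := mul_le_mul_of_nonneg_right hn1 hMw0
            _ = (D*Mw)* |s| := by ring
        have h2 : ((D*Mw)* |s|)^(p+1) = (D*Mw)^(p+1) * |s|^(p+1) :=
          Real.mul_rpow (mul_nonneg hD0 hMw0) (abs_nonneg s)
        calc |Iv| ≤ (|n-1| *Mw)^(p+1) * |(1:ℝ) - 0| := hIb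
          _ = (|n-1| *Mw)^(p+1) := by norm_num
          _ ≤ ((D*Mw)* |s|)^(p+1) := h1
          _ = (D*Mw)^(p+1) * |s|^(p+1) := h2
      have hfrac : (0:ℝ) < 1/(p+1) := by positivity
      have hfrac1 : 1/(p+1) ≤ 1 := by
        rw [div_le_one hp1]; linarith [hp.1]
      have htri : |1/2 * ((n-1)^2*n) - 1/(p+1) * Iv|
          ≤ 1/2 * ((n-1)^2*n) + 1/(p+1) * |Iv| := by
        calc |1/2 * ((n-1)^2*n) - 1/(p+1) * Iv|
            ≤ |1/2 * ((n-1)^2*n)| + |1/(p+1) * Iv| := abs_sub _ _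
          _ = 1/2 * ((n-1)^2*n) + 1/(p+1) * |Iv| := by
              rw [abs_of_nonneg (mul_nonneg (by norm_num : (0:ℝ) ≤ 1/2)
                (mul_nonneg (sq_nonneg _) hnn)), abs_mul, abs_of_nonneg hfrac.le]
      have hprod : (n-1)^2 * n ≤ (D^2*(|s| * |s|)) * (1+D) :=
        mul_le_mul hsq hnle hnn (by positivity)
      have hIvn : 0 ≤ |Iv| := abs_nonneg _
      have hfin : 1/(p+1) * |Iv| ≤ (D*Mw)^(p+1) * |s|^(p+1) := by
        calc 1/(p+1) * |Iv| ≤ 1 * |Iv| := mul_le_mul_of_nonneg_right hfrac1 hIvn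
          _ = |Iv| := one_mul _
          _ ≤ (D*Mw)^(p+1) * |s|^(p+1) := hIb2
      calc |1/2 * ((n-1)^2*n) - 1/(p+1) * Iv|
          ≤ 1/2 * ((n-1)^2*n) + 1/(p+1) * |Iv| := htri
        _ ≤ 1/2 * ((D^2*(|s| * |s|)) * (1+D)) + (D*Mw)^(p+1) * |s|^(p+1) := by
            linarith [hprod, hfin]
        _ = ((1+D)/2*D^2)*(|s| * |s|) + (D*Mw)^(p+1) * |s|^(p+1) := by ring
        _ ≤ K*(|s| * |s|) + K*(|s|^(p+1)) :=
            add_le_add (mul_le_mul_of_nonneg_right hK2 hss)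
              (mul_le_mul_of_nonneg_right hK3 hrp)
        _ = K * (|s| * |s| + |s|^(p+1)) := by ring
  -- wrap up via little-o
  rw [hasDerivAt_iff_isLittleO]
  have hF0 : Ipw p (u + (0:ℝ) • v) = 0 := by
    have h0 : u + (0:ℝ) • v = u := by funext x; simp
    rw [h0, Ipw, if_pos (le_of_eq hn), hn, one_pow, mul_one, Real.cos_two_pi]
    ring
  rw [Asymptotics.isLittleO_iff]
  intro c hc
  have t1 : Filter.Tendsto (fun s : ℝ => |s|) (𝓝 0) (𝓝 0) := by
    simpa using continuous_abs.tendsto (0:ℝ)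
  have t2 : Filter.Tendsto (fun s : ℝ => |s| ^ p) (𝓝 0) (𝓝 0) := by
    have h := ((Real.continuousAt_rpow_const 0 p (Or.inr hp.1.le)).tendsto).comp t1
    simpa [Function.comp_def, Real.zero_rpow (ne_of_gt hp.1)] using h
  have tend : Filter.Tendsto (fun s : ℝ => K * (|s| + |s| ^ p)) (𝓝 0) (𝓝 0) := by
    have h := (t1.add t2).const_mul K
    simpa using h
  filter_upwards [tend.eventually_lt_const hc,
    t1.eventually_lt_const (show (0:ℝ) < 1 by norm_num)] with s h1 h2
  simp only [hF0, sub_zero, smul_zero, Real.norm_eq_abs]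
  have hb := key s h2.le
  have hsplit : |s|^(p+1) = |s|^p * |s| := by
    rw [Real.rpow_add' (abs_nonneg s) (by linarith [hp.1] : p + 1 ≠ 0), Real.rpow_one]
  calc |Ipw p (u + s • v)| ≤ K*(|s| * |s| + |s|^(p+1)) := hb
    _ = (K*(|s| + |s|^p)) * |s| := by rw [hsplit]; ring
    _ ≤ c * |s| := mul_le_mul_of_nonneg_right h1.le (abs_nonneg s)

lemma not_crit_small {p : ℝ} (hp : p ∈ Set.Ioo (0:ℝ) 1) {u : ℝ → ℝ} (hu : MemH10 u)
    (h0 : 0 < Hnorm u) (h1 : Hnorm u < 1/2) : ¬ IsCritPt p u := by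
  intro hcrit
  have h := hcrit u hu
  set a : ℝ := ∫ x in (0:ℝ)..1, (deriv u x)^2 with ha'
  have ha1 : Hnorm u ^ 2 = a := Hnorm_sq u
  clear_value a
  have ha0 : 0 < a := by rw [← ha1]; exact pow_pos h0 2
  have ha4 : a < 1/4 := by nlinarith [ha1, h0, h1]
  have hW : ∀ s : ℝ, (u + s • u) = fun x => 1 * u x + s * u x := by
    intro s; funext x; simp
  have hmm : (fun x => deriv u x * deriv u x) = fun x => (deriv u x)^2 := by
    funext x; ring
  have hNs : ∀ s : ℝ, (∫ x in (0:ℝ)..1, (deriv (u + s • u) x)^2) = (1+s)^2 * a := by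
    intro s
    rw [hW s, integral_deriv_combo hu hu 1 s, hmm, ← ha']
    ring
  have t1 : Filter.Tendsto (fun s : ℝ => |s|) (𝓝 0) (𝓝 0) := by
    simpa using continuous_abs.tendsto (0:ℝ)
  have heq : (fun s : ℝ => Ipw p (u + s • u))
      =ᶠ[𝓝 0] (fun s : ℝ => 1 - Real.cos (2*π*((1+s)^2*a))) := by
    filter_upwards [t1.eventually_lt_const (show (0:ℝ) < 1 by norm_num)] with s hs
    have habs := abs_lt.1 hs
    have hle : (1+s)^2 * a ≤ 1 := by nlinarith [ha4, ha0, habs.1, habs.2]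
    have hH : Hnorm (u + s • u) ≤ 1 := by
      rw [Hnorm, hNs s]
      rw [Real.sqrt_le_left zero_le_one]
      simpa using hle
    rw [Ipw, if_pos hH, Hnorm_sq, hNs s]
  have hinner : HasDerivAt (fun s : ℝ => 2*π*((1+s)^2*a)) (2*π*(2*(1+(0:ℝ))*a)) 0 := by
    have h1 : HasDerivAt (fun s : ℝ => 1 + s) 1 0 := (hasDerivAt_id 0).const_add 1
    have h2 := (h1.fun_pow 2).mul_const a
    have h3 := h2.const_mul (2*π)
    refine h3.congr_deriv ?_
    norm_num
  have hcos := (Real.hasDerivAt_cos (2*π*((1+(0:ℝ))^2*a))).comp 0 hinner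
  have hg : HasDerivAt (fun s : ℝ => 1 - Real.cos (2*π*((1+s)^2*a)))
      (Real.sin (2*π*a) * (4*π*a)) 0 := by
    have h4 := hcos.const_sub 1
    refine h4.congr_deriv ?_
    simp only [add_zero, one_pow, one_mul]
    ring
  have h5 : HasDerivAt (fun s : ℝ => Ipw p (u + s • u)) (Real.sin (2*π*a) * (4*π*a)) 0 :=
    hg.congr_of_eventuallyEq heq
  have huniq : Real.sin (2*π*a) * (4*π*a) = 0 := h5.unique h
  have hpa : (0:ℝ) < π * a := mul_pos Real.pi_pos ha0
  have hsin : 0 < Real.sin (2*π*a) := by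
    apply Real.sin_pos_of_pos_of_lt_pi
    · nlinarith [hpa]
    · nlinarith [Real.pi_pos, hpa, mul_lt_mul_of_pos_left ha4 Real.pi_pos]
  have hpos : 0 < Real.sin (2*π*a) * (4*π*a) := mul_pos hsin (by nlinarith [hpa])
  linarith [huniq, hpos]

/-- Every point of the unit sphere `S = {‖u‖ = 1}` of `H¹₀(0,1)` is a critical point of the
piecewise functional `I` with `I(u) = 0`, and `0` is an isolated critical point of `I`. -/
theorem stmt_16 (p : ℝ) (hp : p ∈ Set.Ioo (0 : ℝ) 1) :
    (∀ u : ℝ → ℝ, MemH10 u → Hnorm u = 1 → Ipw p u = 0 ∧ IsCritPt p u) ∧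
      ∃ r > (0 : ℝ), ∀ u : ℝ → ℝ, MemH10 u → 0 < Hnorm u → Hnorm u < r →
        ¬ IsCritPt p u := by

  constructor
  · intro u hu hn
    refine ⟨?_, crit_on_sphere hp hu hn⟩
    rw [Ipw, if_pos (le_of_eq hn), hn, one_pow, mul_one, Real.cos_two_pi]
    ring
  · exact ⟨1/2, by norm_num, fun u hu h0 h1 => not_crit_small hp hu h0 h1⟩

end
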